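/- Let G be a PLB graph on n vertices with exponent γ > 1 and constant c₀. Then for every real c > 0 there is a constant C (depending only on c₀, γ, and c) such that for every natural number k ≥ 1, Σ_{d=1}^{k} d^c · n(d) ≤ C · n · Σ_{d=1}^{k} d^{c−γ}. -/

import Mathlib

/-- The number of vertices of `G` of degree exactly `d`. -/
noncomputable def degCount {V : Type*} [Fintype V] (G : SimpleGraph V) (d : ℕ) : ℕ :=
  {v : V | {u | G.Adj v u}.ncard = d}.ncard

/-- `G` is power-law bounded with exponent `γ` and constant `c₀` if for every `r ≥ 0`,
`Σ_{d=2^r}^{2^(r+1)} n(d) ≤ c₀ n Σ_{d=2^r}^{2^(r+1)} d^(-γ)`. -/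
def IsPLB {V : Type*} [Fintype V] (G : SimpleGraph V) (γ c₀ : ℝ) : Prop :=
  ∀ r : ℕ,
    (∑ d ∈ Finset.Icc (2 ^ r : ℕ) (2 ^ (r + 1)), (degCount G d : ℝ)) ≤
      c₀ * (Fintype.card V : ℝ) *
        ∑ d ∈ Finset.Icc (2 ^ r : ℕ) (2 ^ (r + 1)), (d : ℝ) ^ (-γ)

/-- Lemma on PLB graphs: for every `c > 0` there is a constant `C` (depending only on
`c₀, γ, c`) with `Σ_{d=1}^k d^c n(d) ≤ C n Σ_{d=1}^k d^(c-γ)` for all `k ≥ 1`. -/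
lemma dyadic_decomp (f : ℕ → ℝ) (R : ℕ) :
    ∑ r ∈ Finset.range R, ∑ d ∈ Finset.Ico (2 ^ r) (2 ^ (r + 1)), f d
      = ∑ d ∈ Finset.Ico 1 (2 ^ R), f d := by
  induction R with
  | zero => simp
  | succ R ih =>
      rw [Finset.sum_range_succ, ih,
        Finset.sum_Ico_consecutive f Nat.one_le_two_pow
          (Nat.pow_le_pow_right (by norm_num) (by omega))]

lemma aux1 (c γ : ℝ) (r : ℕ) :
    ((2:ℝ) ^ (r+1)) ^ c * ((2:ℝ) ^ (r+1) * ((2:ℝ) ^ r) ^ (-γ))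
      = (2:ℝ) ^ (c+1) * (2:ℝ) ^ ((r:ℝ) * (c+1-γ)) := by
  rw [← Real.rpow_natCast (2:ℝ) (r+1), ← Real.rpow_natCast (2:ℝ) r,
    ← Real.rpow_mul (by norm_num), ← Real.rpow_mul (by norm_num),
    ← Real.rpow_add (by norm_num), ← Real.rpow_add (by norm_num),
    ← Real.rpow_add (by norm_num)]
  congr 1
  push_cast
  ring

lemma aux2 (c γ : ℝ) (r : ℕ) :
    (2:ℝ) ^ (-γ) * (2:ℝ) ^ ((r:ℝ) * (c+1-γ))
      = (2:ℝ) ^ r * (((2:ℝ) ^ r) ^ c * ((2:ℝ) ^ (r+1)) ^ (-γ)) := by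
  rw [← Real.rpow_natCast (2:ℝ) (r+1), ← Real.rpow_natCast (2:ℝ) r,
    ← Real.rpow_mul (by norm_num), ← Real.rpow_mul (by norm_num),
    ← Real.rpow_add (by norm_num), ← Real.rpow_add (by norm_num),
    ← Real.rpow_add (by norm_num)]
  congr 1
  push_cast
  ring

theorem plb_moment_bound (γ c₀ c : ℝ) (hγ : 1 < γ) (hc₀ : 0 < c₀) (hc : 0 < c) :
    ∃ C : ℝ, 0 < C ∧
      ∀ (V : Type) [Fintype V] (G : SimpleGraph V), IsPLB G γ c₀ →
        ∀ k : ℕ, 1 ≤ k →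
          (∑ d ∈ Finset.Icc 1 k, (d : ℝ) ^ c * (degCount G d : ℝ)) ≤
            C * (Fintype.card V : ℝ) * ∑ d ∈ Finset.Icc 1 k, (d : ℝ) ^ (c - γ) := by
  set β : ℝ := c + 1 - γ with hβ
  refine ⟨c₀ * ((2:ℝ) ^ (c+1) * (1 + (2:ℝ) ^ β) * (2:ℝ) ^ γ + 2), by positivity, ?_⟩
  intro V _ G hG k hk
  set n : ℝ := (Fintype.card V : ℝ) with hn
  have hn0 : 0 ≤ n := Nat.cast_nonneg _
  set C : ℝ := c₀ * ((2:ℝ) ^ (c+1) * (1 + (2:ℝ) ^ β) * (2:ℝ) ^ γ + 2) with hC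
  -- nonnegativity of RHS sum
  have hS0 : 0 ≤ ∑ d ∈ Finset.Icc 1 k, (d : ℝ) ^ (c - γ) :=
    Finset.sum_nonneg fun d _ => Real.rpow_nonneg (Nat.cast_nonneg d) _
  rcases eq_or_lt_of_le hk with hk1 | hk2
  · -- k = 1
    rw [← hk1]
    simp only [Finset.Icc_self, Finset.sum_singleton, Nat.cast_one, Real.one_rpow, one_mul]
    have h0 := hG 0
    simp only [pow_zero, pow_one] at h0
    have h1 : (degCount G 1 : ℝ) ≤ ∑ d ∈ Finset.Icc 1 2, (degCount G d : ℝ) :=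
      Finset.single_le_sum (f := fun d : ℕ => (degCount G d : ℝ))
        (fun d _ => Nat.cast_nonneg _) (Finset.mem_Icc.mpr (by omega))
    have h2 : ∑ d ∈ Finset.Icc (1:ℕ) 2, (d : ℝ) ^ (-γ) ≤ 2 := by
      have : Finset.Icc (1:ℕ) 2 = {1, 2} := by decide
      rw [this, Finset.sum_insert (by decide), Finset.sum_singleton]
      have e1 : ((1:ℕ):ℝ) ^ (-γ) = 1 := by norm_num
      have e2 : ((2:ℕ):ℝ) ^ (-γ) ≤ 1 :=
        Real.rpow_le_one_of_one_le_of_nonpos (by norm_num) (by linarith)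
      linarith
    have h3 : (degCount G 1 : ℝ) ≤ c₀ * n * 2 := by
      calc (degCount G 1 : ℝ) ≤ _ := h1
        _ ≤ c₀ * n * ∑ d ∈ Finset.Icc (1:ℕ) 2, (d : ℝ) ^ (-γ) := h0
        _ ≤ c₀ * n * 2 := by
            have := mul_le_mul_of_nonneg_left h2 (by positivity : (0:ℝ) ≤ c₀ * n)
            linarith
    have hCge : c₀ * 2 ≤ C := by
      rw [hC]
      have : (0:ℝ) < (2:ℝ) ^ (c+1) * (1 + (2:ℝ) ^ β) * (2:ℝ) ^ γ := by positivity
      nlinarith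
    calc (degCount G 1 : ℝ) ≤ c₀ * n * 2 := h3
      _ = c₀ * 2 * n := by ring
      _ ≤ C * n := mul_le_mul_of_nonneg_right hCge hn0
      _ = C * n * 1 := by ring
  · -- k ≥ 2
    have hk2' : 2 ≤ k := hk2
    set R : ℕ := Nat.log 2 k with hR
    have hR1 : 1 ≤ R := by
      rw [hR]
      exact (Nat.le_log_iff_pow_le (by norm_num) (by omega)).mpr (by simpa using hk2')
    have hkR : 2 ^ R ≤ k := Nat.pow_log_le_self 2 (by omega)
    have hkR' : k < 2 ^ (R + 1) := Nat.lt_pow_succ_log_self (by norm_num) k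
    -- Step 1 : LHS ≤ sum over dyadic Icc blocks, r ∈ range (R+1)
    have step1 : (∑ d ∈ Finset.Icc 1 k, (d : ℝ) ^ c * (degCount G d : ℝ)) ≤
        ∑ r ∈ Finset.range (R+1), ∑ d ∈ Finset.Icc (2^r : ℕ) (2^(r+1)),
          (d : ℝ) ^ c * (degCount G d : ℝ) := by
      have t1 : (∑ d ∈ Finset.Icc 1 k, (d : ℝ) ^ c * (degCount G d : ℝ)) ≤
          ∑ d ∈ Finset.Ico (1:ℕ) (2^(R+1)), (d : ℝ) ^ c * (degCount G d : ℝ) := by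
        refine Finset.sum_le_sum_of_subset_of_nonneg ?_ (fun d _ _ => by positivity)
        intro d hd
        simp only [Finset.mem_Icc] at hd
        simp only [Finset.mem_Ico]
        omega
      rw [← dyadic_decomp (fun d => (d : ℝ) ^ c * (degCount G d : ℝ)) (R+1)] at t1
      refine t1.trans (Finset.sum_le_sum fun r _ => ?_)
      refine Finset.sum_le_sum_of_subset_of_nonneg ?_ (fun d _ _ => by positivity)
      intro d hd
      simp only [Finset.mem_Ico] at hd
      simp only [Finset.mem_Icc]
      omega
    -- Step 2 : per-block bound
    have step2 : ∀ r : ℕ, ∑ d ∈ Finset.Icc (2^r : ℕ) (2^(r+1)),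
          (d : ℝ) ^ c * (degCount G d : ℝ) ≤
        c₀ * n * ((2:ℝ) ^ (c+1) * (2:ℝ) ^ ((r:ℝ) * β)) := by
      intro r
      have b1 : ∑ d ∈ Finset.Icc (2^r : ℕ) (2^(r+1)), (d : ℝ) ^ c * (degCount G d : ℝ) ≤
          ((2:ℝ) ^ (r+1)) ^ c * ∑ d ∈ Finset.Icc (2^r : ℕ) (2^(r+1)), (degCount G d : ℝ) := by
        rw [Finset.mul_sum]
        refine Finset.sum_le_sum fun d hd => ?_
        simp only [Finset.mem_Icc] at hd
        refine mul_le_mul_of_nonneg_right ?_ (Nat.cast_nonneg _)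
        refine Real.rpow_le_rpow (Nat.cast_nonneg _) ?_ hc.le
        exact_mod_cast hd.2
      have b2 : ∑ d ∈ Finset.Icc (2^r : ℕ) (2^(r+1)), (d:ℝ) ^ (-γ) ≤
          (2:ℝ) ^ (r+1) * ((2:ℝ) ^ r) ^ (-γ) := by
        have card_eq : (Finset.Icc (2^r : ℕ) (2^(r+1))).card = 2^r + 1 := by
          rw [Nat.card_Icc, pow_succ]; omega
        calc ∑ d ∈ Finset.Icc (2^r : ℕ) (2^(r+1)), (d:ℝ) ^ (-γ)
            ≤ (Finset.Icc (2^r : ℕ) (2^(r+1))).card • (((2:ℝ) ^ r) ^ (-γ)) := by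
              refine Finset.sum_le_card_nsmul _ _ _ fun d hd => ?_
              simp only [Finset.mem_Icc] at hd
              refine Real.rpow_le_rpow_of_nonpos (by positivity) ?_ (by linarith)
              calc ((2:ℝ) ^ r) = ((2^r : ℕ) : ℝ) := by push_cast; ring
                _ ≤ (d:ℝ) := by exact_mod_cast hd.1
          _ = ((2^r + 1 : ℕ) : ℝ) * ((2:ℝ) ^ r) ^ (-γ) := by
              rw [card_eq, nsmul_eq_mul]
          _ ≤ (2:ℝ) ^ (r+1) * ((2:ℝ) ^ r) ^ (-γ) := by
              refine mul_le_mul_of_nonneg_right ?_ (by positivity)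
              push_cast
              rw [pow_succ]
              nlinarith [one_le_pow₀ (by norm_num : (1:ℝ) ≤ 2) (n := r)]
      calc ∑ d ∈ Finset.Icc (2^r : ℕ) (2^(r+1)), (d : ℝ) ^ c * (degCount G d : ℝ)
          ≤ ((2:ℝ) ^ (r+1)) ^ c * ∑ d ∈ Finset.Icc (2^r : ℕ) (2^(r+1)), (degCount G d : ℝ) := b1
        _ ≤ ((2:ℝ) ^ (r+1)) ^ c * (c₀ * n * ∑ d ∈ Finset.Icc (2^r : ℕ) (2^(r+1)), (d:ℝ) ^ (-γ)) :=
            mul_le_mul_of_nonneg_left (hG r) (by positivity)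
        _ ≤ ((2:ℝ) ^ (r+1)) ^ c * (c₀ * n * ((2:ℝ) ^ (r+1) * ((2:ℝ) ^ r) ^ (-γ))) :=
            mul_le_mul_of_nonneg_left (mul_le_mul_of_nonneg_left b2 (by positivity))
              (by positivity)
        _ = c₀ * n * (((2:ℝ) ^ (r+1)) ^ c * ((2:ℝ) ^ (r+1) * ((2:ℝ) ^ r) ^ (-γ))) := by ring
        _ = c₀ * n * ((2:ℝ) ^ (c+1) * (2:ℝ) ^ ((r:ℝ) * β)) := by rw [aux1]
    -- Step 3 : geometric sum bound
    have step3 : ∑ r ∈ Finset.range (R+1), (2:ℝ) ^ ((r:ℝ) * β) ≤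
        (1 + (2:ℝ) ^ β) * ∑ r ∈ Finset.range R, (2:ℝ) ^ ((r:ℝ) * β) := by
      rw [Finset.sum_range_succ]
      have e1 : ((R:ℝ)) * β = β + ((R-1 : ℕ) : ℝ) * β := by
        rw [Nat.cast_sub hR1]; push_cast; ring
      have e2 : (2:ℝ) ^ ((R:ℝ) * β) = (2:ℝ) ^ β * (2:ℝ) ^ (((R-1:ℕ):ℝ) * β) := by
        rw [e1, Real.rpow_add (by norm_num)]
      have e3 : (2:ℝ) ^ (((R-1:ℕ):ℝ) * β) ≤ ∑ r ∈ Finset.range R, (2:ℝ) ^ ((r:ℝ) * β) :=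
        Finset.single_le_sum (f := fun r : ℕ => (2:ℝ) ^ ((r:ℝ) * β))
          (fun r _ => by positivity) (Finset.mem_range.mpr (by omega))
      have hp : (0:ℝ) ≤ (2:ℝ) ^ β := by positivity
      nlinarith [Finset.sum_nonneg (fun r (_ : r ∈ Finset.range R) =>
        (by positivity : (0:ℝ) ≤ (2:ℝ) ^ ((r:ℝ) * β)))]
    -- Step 4 : lower bound on RHS sum
    have step4 : ∑ r ∈ Finset.range R, (2:ℝ) ^ ((r:ℝ) * β) ≤
        (2:ℝ) ^ γ * ∑ d ∈ Finset.Icc 1 k, (d : ℝ) ^ (c - γ) := by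
      have per : ∀ r : ℕ, (2:ℝ) ^ (-γ) * (2:ℝ) ^ ((r:ℝ) * β) ≤
          ∑ d ∈ Finset.Ico (2^r : ℕ) (2^(r+1)), (d : ℝ) ^ (c - γ) := by
        intro r
        have card_eq : (Finset.Ico (2^r : ℕ) (2^(r+1))).card = 2^r := by
          rw [Nat.card_Ico, pow_succ]; omega
        have lb : ∀ d ∈ Finset.Ico (2^r : ℕ) (2^(r+1)),
            ((2:ℝ) ^ r) ^ c * ((2:ℝ) ^ (r+1)) ^ (-γ) ≤ (d : ℝ) ^ (c - γ) := by
          intro d hd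
          simp only [Finset.mem_Ico] at hd
          have hd1 : ((2:ℝ) ^ r) ≤ (d:ℝ) := by
            calc ((2:ℝ) ^ r) = ((2^r : ℕ) : ℝ) := by push_cast; ring
              _ ≤ (d:ℝ) := by exact_mod_cast hd.1
          have hd0 : (0:ℝ) < (d:ℝ) := lt_of_lt_of_le (by positivity) hd1
          have hd2 : (d:ℝ) ≤ (2:ℝ) ^ (r+1) := by
            calc (d:ℝ) ≤ ((2^(r+1) : ℕ) : ℝ) := by exact_mod_cast hd.2.le
              _ = (2:ℝ) ^ (r+1) := by push_cast; ring
          have h1 : ((2:ℝ) ^ r) ^ c ≤ (d:ℝ) ^ c :=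
            Real.rpow_le_rpow (by positivity) hd1 hc.le
          have h2 : ((2:ℝ) ^ (r+1)) ^ (-γ) ≤ (d:ℝ) ^ (-γ) :=
            Real.rpow_le_rpow_of_nonpos hd0 hd2 (by linarith)
          calc ((2:ℝ) ^ r) ^ c * ((2:ℝ) ^ (r+1)) ^ (-γ)
              ≤ (d:ℝ) ^ c * (d:ℝ) ^ (-γ) :=
                mul_le_mul h1 h2 (by positivity) (Real.rpow_nonneg hd0.le _)
            _ = (d:ℝ) ^ (c - γ) := by
                rw [← Real.rpow_add hd0]; ring_nf
        calc (2:ℝ) ^ (-γ) * (2:ℝ) ^ ((r:ℝ) * β)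
            = (2:ℝ) ^ r * (((2:ℝ) ^ r) ^ c * ((2:ℝ) ^ (r+1)) ^ (-γ)) := aux2 c γ r
          _ = (Finset.Ico (2^r : ℕ) (2^(r+1))).card •
                (((2:ℝ) ^ r) ^ c * ((2:ℝ) ^ (r+1)) ^ (-γ)) := by
              rw [card_eq, nsmul_eq_mul]; push_cast; ring
          _ ≤ ∑ d ∈ Finset.Ico (2^r : ℕ) (2^(r+1)), (d : ℝ) ^ (c - γ) :=
              Finset.card_nsmul_le_sum _ _ _ lb
      have t : (2:ℝ) ^ (-γ) * ∑ r ∈ Finset.range R, (2:ℝ) ^ ((r:ℝ) * β) ≤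
          ∑ d ∈ Finset.Icc 1 k, (d : ℝ) ^ (c - γ) := by
        rw [Finset.mul_sum]
        calc ∑ r ∈ Finset.range R, (2:ℝ) ^ (-γ) * (2:ℝ) ^ ((r:ℝ) * β)
            ≤ ∑ r ∈ Finset.range R, ∑ d ∈ Finset.Ico (2^r : ℕ) (2^(r+1)), (d : ℝ) ^ (c - γ) :=
              Finset.sum_le_sum fun r _ => per r
          _ = ∑ d ∈ Finset.Ico (1:ℕ) (2^R), (d : ℝ) ^ (c - γ) :=
              dyadic_decomp (fun d => (d : ℝ) ^ (c - γ)) R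
          _ ≤ ∑ d ∈ Finset.Icc 1 k, (d : ℝ) ^ (c - γ) := by
              refine Finset.sum_le_sum_of_subset_of_nonneg ?_
                (fun d _ _ => Real.rpow_nonneg (Nat.cast_nonneg d) _)
              intro d hd
              simp only [Finset.mem_Ico] at hd
              simp only [Finset.mem_Icc]
              omega
      have := mul_le_mul_of_nonneg_left t (by positivity : (0:ℝ) ≤ (2:ℝ) ^ γ)
      calc ∑ r ∈ Finset.range R, (2:ℝ) ^ ((r:ℝ) * β)
          = (2:ℝ) ^ γ * ((2:ℝ) ^ (-γ) * ∑ r ∈ Finset.range R, (2:ℝ) ^ ((r:ℝ) * β)) := by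
            rw [← mul_assoc, ← Real.rpow_add (by norm_num)]
            simp
        _ ≤ (2:ℝ) ^ γ * ∑ d ∈ Finset.Icc 1 k, (d : ℝ) ^ (c - γ) := this
    -- assemble
    have main : (∑ d ∈ Finset.Icc 1 k, (d : ℝ) ^ c * (degCount G d : ℝ)) ≤
        c₀ * (2:ℝ) ^ (c+1) * (1 + (2:ℝ) ^ β) * (2:ℝ) ^ γ * n *
          ∑ d ∈ Finset.Icc 1 k, (d : ℝ) ^ (c - γ) := by
      calc (∑ d ∈ Finset.Icc 1 k, (d : ℝ) ^ c * (degCount G d : ℝ))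
          ≤ ∑ r ∈ Finset.range (R+1), ∑ d ∈ Finset.Icc (2^r : ℕ) (2^(r+1)),
              (d : ℝ) ^ c * (degCount G d : ℝ) := step1
        _ ≤ ∑ r ∈ Finset.range (R+1), c₀ * n * ((2:ℝ) ^ (c+1) * (2:ℝ) ^ ((r:ℝ) * β)) :=
            Finset.sum_le_sum fun r _ => step2 r
        _ = c₀ * n * (2:ℝ) ^ (c+1) * ∑ r ∈ Finset.range (R+1), (2:ℝ) ^ ((r:ℝ) * β) := by
            rw [Finset.mul_sum]; congr 1; ext r; ring
        _ ≤ c₀ * n * (2:ℝ) ^ (c+1) *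
              ((1 + (2:ℝ) ^ β) * ∑ r ∈ Finset.range R, (2:ℝ) ^ ((r:ℝ) * β)) :=
            mul_le_mul_of_nonneg_left step3 (by positivity)
        _ ≤ c₀ * n * (2:ℝ) ^ (c+1) *
              ((1 + (2:ℝ) ^ β) * ((2:ℝ) ^ γ * ∑ d ∈ Finset.Icc 1 k, (d : ℝ) ^ (c - γ))) := by
            refine mul_le_mul_of_nonneg_left ?_ (by positivity)
            exact mul_le_mul_of_nonneg_left step4 (by positivity)
        _ = c₀ * (2:ℝ) ^ (c+1) * (1 + (2:ℝ) ^ β) * (2:ℝ) ^ γ * n *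
              ∑ d ∈ Finset.Icc 1 k, (d : ℝ) ^ (c - γ) := by ring
    refine main.trans ?_
    rw [hC]
    have h1 : c₀ * (2:ℝ) ^ (c+1) * (1 + (2:ℝ) ^ β) * (2:ℝ) ^ γ ≤
        c₀ * ((2:ℝ) ^ (c+1) * (1 + (2:ℝ) ^ β) * (2:ℝ) ^ γ + 2) := by nlinarith
    have h2 : (0:ℝ) ≤ n * ∑ d ∈ Finset.Icc 1 k, (d : ℝ) ^ (c - γ) := mul_nonneg hn0 hS0
    calc c₀ * (2:ℝ) ^ (c+1) * (1 + (2:ℝ) ^ β) * (2:ℝ) ^ γ * n *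
          ∑ d ∈ Finset.Icc 1 k, (d : ℝ) ^ (c - γ)
        = c₀ * (2:ℝ) ^ (c+1) * (1 + (2:ℝ) ^ β) * (2:ℝ) ^ γ *
            (n * ∑ d ∈ Finset.Icc 1 k, (d : ℝ) ^ (c - γ)) := by ring
      _ ≤ c₀ * ((2:ℝ) ^ (c+1) * (1 + (2:ℝ) ^ β) * (2:ℝ) ^ γ + 2) *
            (n * ∑ d ∈ Finset.Icc 1 k, (d : ℝ) ^ (c - γ)) :=
          mul_le_mul_of_nonneg_right h1 h2
      _ = c₀ * ((2:ℝ) ^ (c+1) * (1 + (2:ℝ) ^ β) * (2:ℝ) ^ γ + 2) * n *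
            ∑ d ∈ Finset.Icc 1 k, (d : ℝ) ^ (c - γ) := by ring
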